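/- Fix 0 < ε < 1/2 and let φ be evaluation at the point ((2ε)^{2^0}, …, (2ε)^{2^{n−1}}) ∈ ℝⁿ. For any polynomial λ of degree at most d, |φ(λ · y_n²)| ≤ (2ε)^{2^{n−1}} · (n+1)^d · ‖λ‖, where ‖λ‖ is the maximum absolute value of a coefficient of λ. Consequently, in any identity ε − y₁ = Σᵢ hᵢ² + Σ_{i=1}^{n−1} σᵢ(yᵢ² − y_{i+1}) + λ·y_n² with all terms of degree at most d, the polynomial λ must satisfy ‖λ‖ ≥ ε·(2ε)^{−2^{n−1}}·(n+1)^{−d}. -/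

import Mathlib

open MvPolynomial

noncomputable def auxMap (n d : ℕ) (m : Fin n →₀ ℕ) : List.Vector (Fin (n+1)) d :=
  if hm : (m.sum fun _ e => e) ≤ d then
    ⟨Multiset.sort (m.toMultiset.map Fin.succ +
        Multiset.replicate (d - (m.sum fun _ e => e)) (0 : Fin (n+1))) (· ≤ ·), by
      rw [Multiset.length_sort]
      simp only [Multiset.card_add, Multiset.card_map, Multiset.card_replicate,
        Finsupp.card_toMultiset]
      have h1 : (m.sum fun _ => id) = (m.sum fun _ e => e) := rfl
      rw [h1]; omega⟩
  else ⟨List.replicate d 0, List.length_replicate⟩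

lemma aux_card_le_pow (n d : ℕ) (s : Finset (Fin n →₀ ℕ))
    (hs : ∀ m ∈ s, (m.sum fun _ e => e) ≤ d) : s.card ≤ (n + 1) ^ d := by
  classical
  have key : s.card ≤ (Finset.univ : Finset (List.Vector (Fin (n+1)) d)).card := by
    apply Finset.card_le_card_of_injOn (auxMap n d) (fun m _ => Finset.mem_univ _)
    intro m₁ h₁ m₂ h₂ heq
    unfold auxMap at heq
    erw [dif_pos (hs m₁ h₁), dif_pos (hs m₂ h₂)] at heq
    have hM : m₁.toMultiset.map Fin.succ +
        Multiset.replicate (d - (m₁.sum fun _ e => e)) (0 : Fin (n+1)) =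
        m₂.toMultiset.map Fin.succ +
        Multiset.replicate (d - (m₂.sum fun _ e => e)) (0 : Fin (n+1)) := by
      have := congrArg (fun v : List.Vector (Fin (n+1)) d =>
        (↑v.toList : Multiset (Fin (n+1)))) heq
      simpa [Multiset.sort_eq, List.Vector.toList] using this
    ext a
    have hc := congrArg (Multiset.count (Fin.succ a)) hM
    simpa [Multiset.count_map_eq_count' _ _ (Fin.succ_injective n),
      Multiset.count_replicate, (Fin.succ_ne_zero a), (Fin.succ_ne_zero a).symm, Finsupp.count_toMultiset] using hc
  calc s.card ≤ _ := key
    _ ≤ (n+1)^d := by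
      rw [Finset.card_univ, card_vector, Fintype.card_fin]

lemma aux_td_le_mul_X {n : ℕ} (p : MvPolynomial (Fin n) ℝ) (s : Fin n) :
    p.totalDegree ≤ (p * X s).totalDegree := by
  classical
  apply Finset.sup_le
  intro m hm
  have hmem : m + Finsupp.single s 1 ∈ (p * X s).support := by
    rw [mem_support_iff, coeff_mul_X]
    exact mem_support_iff.mp hm
  refine le_trans ?_ (le_totalDegree hmem)
  rw [Finsupp.sum_add_index (by simp) (by simp)]
  simp

lemma aux_eval_abs_le {n d : ℕ} (c : ℝ) (hc0 : 0 < c) (hc1 : c ≤ 1)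
    (p : MvPolynomial (Fin n) ℝ) (hp : p.totalDegree ≤ d) (N : ℝ)
    (hN : ∀ m, |coeff m p| ≤ N) :
    |eval (fun i : Fin n => c ^ (2 ^ (i : ℕ))) p| ≤ ((n : ℝ) + 1) ^ d * N := by
  classical
  have hN0 : 0 ≤ N := le_trans (abs_nonneg _) (hN 0)
  rw [eval_eq']
  calc |∑ m ∈ p.support, coeff m p * ∏ i : Fin n, (c ^ 2 ^ (i : ℕ)) ^ m i|
      ≤ ∑ m ∈ p.support, |coeff m p * ∏ i : Fin n, (c ^ 2 ^ (i : ℕ)) ^ m i| :=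
        Finset.abs_sum_le_sum_abs _ _
    _ ≤ ∑ m ∈ p.support, N := by
        refine Finset.sum_le_sum fun m _ => ?_
        rw [abs_mul]
        have hprod0 : (0:ℝ) ≤ ∏ i : Fin n, (c ^ 2 ^ (i : ℕ)) ^ m i :=
          Finset.prod_nonneg fun i _ => pow_nonneg (pow_nonneg hc0.le _) _
        have hprod1 : |∏ i : Fin n, (c ^ 2 ^ (i : ℕ)) ^ m i| ≤ 1 := by
          rw [abs_of_nonneg hprod0]
          exact Finset.prod_le_one (fun i _ => pow_nonneg (pow_nonneg hc0.le _) _)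
            (fun i _ => pow_le_one₀ (pow_nonneg hc0.le _) (pow_le_one₀ hc0.le hc1))
        calc |coeff m p| * |∏ i : Fin n, (c ^ 2 ^ (i : ℕ)) ^ m i| ≤ N * 1 :=
              mul_le_mul (hN m) hprod1 (abs_nonneg _) hN0
          _ = N := mul_one N
    _ = (p.support.card : ℝ) * N := by rw [Finset.sum_const, nsmul_eq_mul]
    _ ≤ ((n : ℝ) + 1) ^ d * N := by
        refine mul_le_mul_of_nonneg_right ?_ hN0
        have hcard := aux_card_le_pow n d p.support
          (fun m hm => le_trans (le_totalDegree hm) hp)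
        calc (p.support.card : ℝ) ≤ (((n+1)^d : ℕ) : ℝ) := Nat.cast_le.2 hcard
          _ = ((n : ℝ) + 1) ^ d := by push_cast; ring

/-- Let φ be evaluation at the point ((2ε)^{2^0}, …, (2ε)^{2^{n−1}}) (variables
0-indexed, X i standing for y_{i+1}).  (1) For any λ of degree at most d with all
coefficients bounded by N in absolute value, |φ(λ·y_n²)| ≤ (2ε)^{2^{n−1}}·(n+1)^d·N.
(2) Consequently, in any degree-d SoS identity
ε − y₁ = Σ hᵢ² + Σ σᵢ(yᵢ² − y_{i+1}) + λ·y_n², the polynomial λ has some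
coefficient of absolute value at least ε·(2ε)^{−2^{n−1}}·(n+1)^{−d}. -/
theorem stmt_17 (n d : ℕ) (hn : 1 ≤ n) (ε : ℝ) (hε0 : 0 < ε) (hε : ε < 1 / 2) :
    (∀ lam : MvPolynomial (Fin n) ℝ, lam.totalDegree ≤ d →
      ∀ N : ℝ, (∀ m : Fin n →₀ ℕ, |coeff m lam| ≤ N) →
        |eval (fun i : Fin n => (2 * ε) ^ (2 ^ (i : ℕ))) (lam * X ⟨n - 1, by omega⟩ ^ 2)|
          ≤ (2 * ε) ^ (2 ^ (n - 1)) * ((n : ℝ) + 1) ^ d * N) ∧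
    (∀ (t : ℕ) (h : Fin t → MvPolynomial (Fin n) ℝ)
        (σ : Fin n → MvPolynomial (Fin n) ℝ) (lam : MvPolynomial (Fin n) ℝ),
      (C ε - X ⟨0, by omega⟩ : MvPolynomial (Fin n) ℝ) =
          (∑ j, h j ^ 2)
          + (∑ i : Fin n,
              if hi : (i : ℕ) + 1 < n then σ i * (X i ^ 2 - X ⟨(i : ℕ) + 1, hi⟩) else 0)
          + lam * X ⟨n - 1, by omega⟩ ^ 2 →
      (∀ j, (h j ^ 2).totalDegree ≤ d) →
      (∀ i : Fin n, ∀ hi : (i : ℕ) + 1 < n,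
        (σ i * (X i ^ 2 - X (⟨(i : ℕ) + 1, hi⟩ : Fin n))).totalDegree ≤ d) →
      (lam * X (⟨n - 1, by omega⟩ : Fin n) ^ 2).totalDegree ≤ d →
      ∃ m : Fin n →₀ ℕ,
        ε * ((2 * ε) ^ (2 ^ (n - 1)))⁻¹ * (((n : ℝ) + 1) ^ d)⁻¹ ≤ |coeff m lam|) := by
  have hc0 : (0:ℝ) < 2 * ε := by linarith
  have hc1 : (2:ℝ) * ε ≤ 1 := by linarith
  set c : ℝ := 2 * ε with hc
  set φ : Fin n → ℝ := fun i : Fin n => c ^ (2 ^ (i : ℕ)) with hφ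
  set jn : Fin n := ⟨n - 1, by omega⟩ with hjn
  have hcp0 : (0:ℝ) < c ^ 2 ^ (n-1) := pow_pos hc0 _
  have hcp1 : c ^ 2 ^ (n-1) ≤ 1 := pow_le_one₀ hc0.le hc1
  have hnd0 : (0:ℝ) < ((n : ℝ) + 1) ^ d :=
    pow_pos (by positivity) _
  have part1 : ∀ lam : MvPolynomial (Fin n) ℝ, lam.totalDegree ≤ d →
      ∀ N : ℝ, (∀ m : Fin n →₀ ℕ, |coeff m lam| ≤ N) →
        |eval φ (lam * X jn ^ 2)| ≤ c ^ (2 ^ (n - 1)) * ((n : ℝ) + 1) ^ d * N := by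
    intro lam hd N hN
    have hN0 : 0 ≤ N := le_trans (abs_nonneg _) (hN 0)
    have hkey : eval φ (lam * X jn ^ 2) = eval φ lam * (c ^ 2 ^ (n-1)) ^ 2 := by
      rw [map_mul, map_pow, eval_X]
    have h1 := aux_eval_abs_le c hc0 hc1 lam hd N hN
    have h2 : (c ^ 2 ^ (n-1)) ^ 2 ≤ c ^ 2 ^ (n-1) := by nlinarith
    rw [hkey, abs_mul, abs_of_nonneg (sq_nonneg (c ^ 2 ^ (n-1)))]
    calc |eval φ lam| * (c ^ 2 ^ (n-1)) ^ 2
        ≤ (((n : ℝ) + 1) ^ d * N) * (c ^ 2 ^ (n-1)) :=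
          mul_le_mul h1 h2 (sq_nonneg _) (by positivity)
      _ = c ^ (2 ^ (n - 1)) * ((n : ℝ) + 1) ^ d * N := by ring
  refine ⟨part1, ?_⟩
  intro t h σ lam heq hh hσ hlam
  -- evaluate the identity
  have hmid : ∑ i : Fin n, eval φ
      (if hi : (i : ℕ) + 1 < n then σ i * (X i ^ 2 - X ⟨(i : ℕ) + 1, hi⟩) else 0) = 0 := by
    refine Finset.sum_eq_zero fun i _ => ?_
    by_cases hi : (i : ℕ) + 1 < n
    · rw [dif_pos hi, map_mul, map_sub, map_pow, eval_X, eval_X]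
      have h2 : (c ^ 2 ^ (i:ℕ)) ^ 2 = c ^ 2 ^ ((i:ℕ)+1) := by
        rw [← pow_mul, pow_succ]
      show eval φ (σ i) * ((c ^ 2 ^ (i:ℕ)) ^ 2 - c ^ 2 ^ ((i:ℕ)+1)) = 0
      rw [h2, sub_self, mul_zero]
    · rw [dif_neg hi, map_zero]
  have hev := congrArg (eval φ) heq
  rw [map_sub, eval_C, eval_X, map_add, map_add, map_sum, map_sum, hmid] at hev
  simp only [map_pow] at hev
  have hφ0 : φ ⟨0, by omega⟩ = c := by
    show c ^ 2 ^ ((0:ℕ)) = c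
    norm_num
  rw [hφ0] at hev
  set S : ℝ := ∑ j, (eval φ (h j)) ^ 2 with hS
  have hS0 : 0 ≤ S := Finset.sum_nonneg fun j _ => sq_nonneg _
  have hEval : eval φ (lam * X jn ^ 2) = -ε - S := by
    have : ε - c = S + 0 + eval φ (lam * X jn ^ 2) := hev
    rw [hc] at this
    linarith
  have hge : ε ≤ |eval φ (lam * X jn ^ 2)| := by
    rw [hEval, abs_of_nonpos (by linarith)]
    linarith
  -- degree of lam
  have hfac : lam * X jn ^ 2 = lam * X jn * X jn := by ring
  have hd1 : lam.totalDegree ≤ d := by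
    refine le_trans (le_trans (aux_td_le_mul_X lam jn) (aux_td_le_mul_X (lam * X jn) jn)) ?_
    rw [← hfac]
    exact hlam
  by_contra hcon
  push_neg at hcon
  set B : ℝ := ε * (c ^ 2 ^ (n - 1))⁻¹ * (((n : ℝ) + 1) ^ d)⁻¹ with hB
  have hKB : c ^ 2 ^ (n-1) * ((n : ℝ) + 1) ^ d * B = ε := by
    rw [hB]
    field_simp
  by_cases hsupp : lam.support.Nonempty
  · set N : ℝ := lam.support.sup' hsupp fun m => |coeff m lam| with hN
    have hNlt : N < B := by
      rw [hN]
      exact (Finset.sup'_lt_iff (f := fun m => |coeff m lam|) (a := B) hsupp).2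
        fun m _ => hcon m
    have hNb : ∀ m, |coeff m lam| ≤ N := by
      intro m
      by_cases hm : m ∈ lam.support
      · exact Finset.le_sup' (fun m => |coeff m lam|) hm
      · have hz : coeff m lam = 0 := notMem_support_iff.mp hm
        rw [hz, abs_zero]
        obtain ⟨m₀, hm₀⟩ := hsupp
        exact le_trans (abs_nonneg _) (Finset.le_sup' (fun m => |coeff m lam|) hm₀)
    have hb := part1 lam hd1 N hNb
    have hlt : c ^ 2 ^ (n-1) * ((n : ℝ) + 1) ^ d * N
        < c ^ 2 ^ (n-1) * ((n : ℝ) + 1) ^ d * B :=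
      mul_lt_mul_of_pos_left hNlt (by positivity)
    linarith
  · have hz : lam = 0 := support_eq_empty.mp (Finset.not_nonempty_iff_eq_empty.mp hsupp)
    rw [hz, zero_mul, map_zero, abs_zero] at hge
    linarith
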